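/- Let X be a dimer covering of Λ_{L,N} with k1 > 0 vertical dimers per row and k2 > 0 north-west dimers per column, and let N_h, N_v be the horizontal and vertical winding numbers of the loop Γ obtained by following up-right neighbors of vertical dimers. Then N_h·k1 = N_v·k2. In particular, writing m1 = k1, the quantity m2 := m1·N_h/N_v is an integer, equal to k2, and it satisfies m1/L + m2/N < 1 whenever n1 + n2 < NL (with n1 = N·k1, n2 = L·k2). -/

import Mathlib

/-!
Dimer coverings (perfect matchings) of the hexagonal lattice `Λ_{L,N}` periodized with
period `L` in the `e₁` direction and period `N` in the `e₂` direction
(Corwin–Toninelli, "A (2+1)-dimensional growth process with explicit stationary measures").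

Black vertices, white vertices and hexagonal faces are all indexed by
`(ℤ/Lℤ) × (ℤ/Nℤ)`.  The edge of type `j ∈ {0,1,2}` at the black vertex `b = (s,t)` joins
`b` to the white vertex `whiteEnd b j`; type `0` edges are the vertical ones ("particles"),
type `1` edges are the north-west oriented ones, type `2` edges are the remaining
(horizontal) ones.  A face `g = (s,t)` is bordered by the six edges
`(s,t,0), (s-1,t,0), (s,t,1), (s,t-1,1), (s-1,t,2), (s,t-1,2)`; stepping from a face to an
adjacent face in direction `+e₁` crosses a vertical edge with the white vertex on the
right, stepping in direction `+e₂` crosses a north-west edge with the white vertex on the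
left.
-/

open scoped Classical

noncomputable section

namespace HexDimers

/-- The common index set for black vertices, white vertices and faces of `Λ_{L,N}`. -/
abbrev Idx (L N : ℕ) := ZMod L × ZMod N

variable {L N : ℕ}

/-- The white endpoint of the edge of type `j` at the black vertex `b`:
type `0` is vertical, type `1` is north-west, type `2` is horizontal. -/
def whiteEnd (b : Idx L N) : Fin 3 → Idx L N :=
  ![b, (b.1 - 1, b.2 + 1), (b.1, b.2 + 1)]

/-- A candidate dimer covering: for every black vertex, the type of the dimer covering it. -/
abbrev Covering (L N : ℕ) := Idx L N → Fin 3

/-- Perfect matchings (dimer coverings): distinct black vertices are matched to distinct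
white vertices (hence, by counting, every white vertex is covered exactly once). -/
def IsCovering (M : Covering L N) : Prop :=
  Function.Injective fun b => whiteEnd b (M b)

/-- The number `n₁` of vertical dimers of a covering. -/
def nVert [NeZero L] [NeZero N] (M : Covering L N) : ℕ :=
  (Finset.univ.filter fun b : Idx L N => M b = 0).card

/-- The number `n₂` of north-west oriented dimers of a covering. -/
def nNW [NeZero L] [NeZero N] (M : Covering L N) : ℕ :=
  (Finset.univ.filter fun b : Idx L N => M b = 1).card

/-- `Ω_{L,N;n₁,n₂}`: the dimer coverings of `Λ_{L,N}` with `n₁` vertical dimers and `n₂`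
north-west oriented dimers. -/
def Omega (L N : ℕ) [NeZero L] [NeZero N] (n1 n2 : ℕ) : Set (Covering L N) :=
  {M | IsCovering M ∧ nVert M = n1 ∧ nNW M = n2}

/-- The six directions in which a face of `Λ_{L,N}` can be left towards an adjacent face:
`R/Lft` are `±e₁`, `U/D` are `±e₂`, and `UL/DR` are `∓(e₁ - e₂)`. -/
inductive Dir | R | Lft | U | D | UL | DR
  deriving DecidableEq

/-- The face reached from the face `g` by one step in direction `d`. -/
def nextFace (g : Idx L N) : Dir → Idx L N
  | .R => (g.1 + 1, g.2)
  | .Lft => (g.1 - 1, g.2)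
  | .U => (g.1, g.2 + 1)
  | .D => (g.1, g.2 - 1)
  | .UL => (g.1 - 1, g.2 + 1)
  | .DR => (g.1 + 1, g.2 - 1)

/-- The edge (given by its black vertex together with its type) crossed when stepping from
the face `g` in direction `d`. -/
def crossEdge (g : Idx L N) : Dir → Idx L N × Fin 3
  | .R => ((g.1, g.2), 0)
  | .Lft => ((g.1 - 1, g.2), 0)
  | .U => ((g.1, g.2), 1)
  | .D => ((g.1, g.2 - 1), 1)
  | .UL => ((g.1 - 1, g.2), 2)
  | .DR => ((g.1, g.2 - 1), 2)

/-- The sign `ε_e` of a crossing: `+1` if the edge is crossed with the white vertex on the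
right, `-1` if it is crossed with the white vertex on the left. -/
def crossSign : Dir → ℤ
  | .R => 1
  | .Lft => -1
  | .U => -1
  | .D => 1
  | .UL => 1
  | .DR => -1

/-- Whether the edge `e` (black vertex and type) is occupied by a dimer of `M`. -/
def occupiedEdge (M : Covering L N) (e : Idx L N × Fin 3) : Prop := M e.1 = e.2

/-- `F_p`: the horizontal distance from the particle (vertical dimer) `p` to its up-right
neighbour `p₆`, the first particle weakly to the right of `p` in the row above. -/
def Fdist (M : Covering L N) (p : Idx L N) : ℕ :=
  sInf {k : ℕ | M (p.1 + (k : ZMod L), p.2 + 1) = 0}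

/-- The map `p ↦ p₆` sending a particle to its up-right neighbour. -/
def stepUR (M : Covering L N) (p : Idx L N) : Idx L N :=
  (p.1 + (Fdist M p : ZMod L), p.2 + 1)

/-- Return time of the loop `Γ` of successive up-right neighbours started at `p`. -/
def retTime (M : Covering L N) (p : Idx L N) : ℕ :=
  sInf {t : ℕ | 0 < t ∧ (stepUR M)^[t] p = p}

/-- Vertical winding number `N_v` of the loop `Γ` started at `p`. -/
def windV (M : Covering L N) (p : Idx L N) : ℕ := retTime M p / N

/-- Horizontal winding number `N_h` of the loop `Γ` started at `p` (the total horizontal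
displacement along `Γ` divided by the horizontal period `L`). -/
def windH (M : Covering L N) (p : Idx L N) : ℕ :=
  (∑ i ∈ Finset.range (retTime M p), Fdist M ((stepUR M)^[i] p)) / L

/-! ### Auxiliary lemmas -/

section Aux

set_option linter.unusedSectionVars false

variable [NeZero L] [NeZero N] {M : Covering L N}

lemma fin3_cases (x : Fin 3) : x = 0 ∨ x = 1 ∨ x = 2 := by revert x; decide

/-- Exact cover, existence: every white vertex is covered. -/
lemma cover_surj (hM : IsCovering M) (u : ZMod L) (v : ZMod N) :
    M (u, v + 1) = 0 ∨ M (u + 1, v) = 1 ∨ M (u, v) = 2 := by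
  have hsurj : Function.Surjective fun b => whiteEnd b (M b) :=
    Finite.surjective_of_injective hM
  obtain ⟨b, hb⟩ := hsurj (u, v + 1)
  have hb : whiteEnd b (M b) = (u, v + 1) := hb
  rcases fin3_cases (M b) with h | h | h <;> rw [h] at hb <;>
    simp only [whiteEnd, Matrix.cons_val_zero, Matrix.cons_val_one, Matrix.head_cons,
      Matrix.cons_val_two, Matrix.tail_cons, Prod.mk.injEq] at hb
  · left; rw [← hb]; exact h
  · right; left
    have h1 : b.1 = u + 1 := by
      have := hb.1; rw [sub_eq_iff_eq_add] at this; exact this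
    have h2 : b.2 = v := by have := hb.2; exact add_right_cancel this
    rw [← h1, ← h2]; exact h
  · right; right
    have h2 : b.2 = v := add_right_cancel hb.2
    rw [← hb.1, ← h2]; exact h

/-- Exact cover, exclusion: a particle and the NW dimer covering the same white vertex. -/
lemma not_01 (hM : IsCovering M) (u : ZMod L) (v : ZMod N) :
    ¬(M (u, v + 1) = 0 ∧ M (u + 1, v) = 1) := by
  rintro ⟨h0, h1⟩
  have heq : ((u, v + 1) : Idx L N) = (u + 1, v) := by
    apply hM
    show whiteEnd (u, v+1) (M (u, v+1)) = whiteEnd (u+1, v) (M (u+1, v))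
    rw [h0, h1]
    simp [whiteEnd]
  rw [heq] at h0
  rw [h0] at h1
  exact absurd h1 (by decide)

/-- Exact cover, exclusion: a NW dimer and a horizontal dimer covering the same white
vertex. -/
lemma not_12 (hM : IsCovering M) (u : ZMod L) (v : ZMod N) :
    ¬(M (u + 1, v) = 1 ∧ M (u, v) = 2) := by
  rintro ⟨h1, h2⟩
  have heq : ((u + 1, v) : Idx L N) = (u, v) := by
    apply hM
    show whiteEnd (u+1, v) (M (u+1, v)) = whiteEnd (u, v) (M (u, v))
    rw [h1, h2]
    simp [whiteEnd]
  rw [heq] at h1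
  rw [h1] at h2
  exact absurd h2 (by decide)

/-- Shorthand: every row contains a particle. -/
def RowEx (M : Covering L N) : Prop := ∀ v : ZMod N, ∃ s : ZMod L, M (s, v) = 0

lemma Fdist_nonempty (hex : RowEx M) (q : Idx L N) :
    {k : ℕ | M (q.1 + (k : ZMod L), q.2 + 1) = 0}.Nonempty := by
  obtain ⟨s, hs⟩ := hex (q.2 + 1)
  refine ⟨(s - q.1).val, ?_⟩
  show M (q.1 + ((s - q.1).val : ZMod L), q.2 + 1) = 0
  rw [ZMod.natCast_zmod_val, add_comm, sub_add_cancel]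
  exact hs

lemma Fdist_mem (hex : RowEx M) (q : Idx L N) :
    M (q.1 + (Fdist M q : ZMod L), q.2 + 1) = 0 :=
  Nat.sInf_mem (Fdist_nonempty hex q)

lemma Fdist_not {q : Idx L N} {k : ℕ} (hk : k < Fdist M q) :
    M (q.1 + (k : ZMod L), q.2 + 1) ≠ 0 :=
  Nat.notMem_of_lt_sInf hk

lemma Fdist_le {q : Idx L N} {k : ℕ} (h : M (q.1 + (k : ZMod L), q.2 + 1) = 0) :
    Fdist M q ≤ k :=
  Nat.sInf_le h

lemma Fdist_lt_L (hex : RowEx M) (q : Idx L N) : Fdist M q < L := by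
  obtain ⟨s, hs⟩ := hex (q.2 + 1)
  have hle : Fdist M q ≤ (s - q.1).val := Fdist_le (by
    rw [ZMod.natCast_zmod_val, add_comm, sub_add_cancel]; exact hs)
  exact lt_of_le_of_lt hle (ZMod.val_lt _)

lemma step_fst (q : Idx L N) : (stepUR M q).1 = q.1 + (Fdist M q : ZMod L) := rfl

lemma step_snd (q : Idx L N) : (stepUR M q).2 = q.2 + 1 := rfl

lemma step_particle (hex : RowEx M) (q : Idx L N) : M (stepUR M q) = 0 :=
  Fdist_mem hex q

lemma iter_snd (q : Idx L N) (n : ℕ) : ((stepUR M)^[n] q).2 = q.2 + (n : ZMod N) := by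
  induction n with
  | zero => simp
  | succ n ih =>
    rw [Function.iterate_succ_apply', step_snd, ih]
    push_cast
    ring

/-- The total horizontal displacement after `n` up-right steps. -/
def Dsum (M : Covering L N) (n : ℕ) (q : Idx L N) : ℕ :=
  ∑ i ∈ Finset.range n, Fdist M ((stepUR M)^[i] q)

lemma Dsum_succ (n : ℕ) (q : Idx L N) :
    Dsum M (n + 1) q = Dsum M n q + Fdist M ((stepUR M)^[n] q) :=
  Finset.sum_range_succ _ _

lemma Dsum_one (q : Idx L N) : Dsum M 1 q = Fdist M q := by
  simp [Dsum]

lemma iter_fst (q : Idx L N) (n : ℕ) :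
    ((stepUR M)^[n] q).1 = q.1 + ((Dsum M n q : ℕ) : ZMod L) := by
  induction n with
  | zero => simp [Dsum]
  | succ n ih =>
    rw [Function.iterate_succ_apply', step_fst, ih, Dsum_succ]
    push_cast
    ring

lemma Dsum_add (a b : ℕ) (q : Idx L N) :
    Dsum M (a + b) q = Dsum M a q + Dsum M b ((stepUR M)^[a] q) := by
  induction b with
  | zero => simp [Dsum]
  | succ b ih =>
    have h1 : a + (b + 1) = (a + b) + 1 := by ring
    rw [h1, Dsum_succ, ih, Dsum_succ]
    have h2 : (stepUR M)^[a + b] q = (stepUR M)^[b] ((stepUR M)^[a] q) := by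
      rw [add_comm, Function.iterate_add_apply]
    rw [h2, add_assoc]

lemma Dsum_period_mul {T : ℕ} {q : Idx L N} (hq : (stepUR M)^[T] q = q) (m : ℕ) :
    Dsum M (T * m) q = m * Dsum M T q := by
  induction m with
  | zero => simp [Dsum]
  | succ m ih =>
    have h1 : T * (m + 1) = T * m + T := by ring
    have h2 : (stepUR M)^[T * m] q = q := by
      rw [Function.iterate_mul]
      exact Function.iterate_fixed hq m
    rw [h1, Dsum_add, ih, h2]
    ring

/-- The run lemma: the `Fdist M q` sites to the right of a particle `q` in its own row are
all occupied by north-west dimers. -/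
lemma run (hM : IsCovering M) {q : Idx L N} (hq : M q = 0) :
    ∀ j : ℕ, 1 ≤ j → j ≤ Fdist M q → M (q.1 + (j : ZMod L), q.2) = 1 := by
  intro j
  induction j with
  | zero => omega
  | succ n ih =>
    intro _ h2
    rcases cover_surj hM (q.1 + (n : ZMod L)) q.2 with h | h | h
    · exact absurd h (Fdist_not (by omega))
    · have : q.1 + ((n : ZMod L)) + 1 = q.1 + (((n + 1 : ℕ)) : ZMod L) := by
        push_cast; ring
      rwa [this] at h
    · rcases Nat.eq_zero_or_pos n with h0 | h0
      · subst h0; simp only [Nat.cast_zero, add_zero] at h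
        rw [Prod.mk.eta] at h
        rw [hq] at h; exact absurd h (by decide)
      · have := ih (by omega) (by omega)
        rw [this] at h; exact absurd h (by decide)

/-- The run stops right after the up-right neighbour's column. -/
lemma endrun (hM : IsCovering M) (hex : RowEx M) (q : Idx L N) :
    M (q.1 + (Fdist M q : ZMod L) + 1, q.2) ≠ 1 := by
  intro h1
  exact not_01 hM (q.1 + (Fdist M q : ZMod L)) q.2 ⟨Fdist_mem hex q, h1⟩

/-- Monotone comparison of `Fdist` for two sites in the same row. -/
lemma F_le_F (hex : RowEx M) (q q' : Idx L N) (h2 : q.2 = q'.2) :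
    Fdist M q ≤ (q'.1 - q.1).val + Fdist M q' := by
  apply Fdist_le
  have hc : (((q'.1 - q.1).val + Fdist M q' : ℕ) : ZMod L)
      = (q'.1 - q.1) + (Fdist M q' : ZMod L) := by
    push_cast [ZMod.natCast_zmod_val]; ring
  rw [hc, h2]
  have : q.1 + (q'.1 - q.1 + (Fdist M q' : ZMod L)) = q'.1 + (Fdist M q' : ZMod L) := by
    ring
  rw [this]
  exact Fdist_mem hex q'

lemma step_inj_aux (hM : IsCovering M) {q q' : Idx L N} (hq : M q = 0) (hq' : M q' = 0)
    (hle : Fdist M q ≤ Fdist M q')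
    (hfst : q.1 + (Fdist M q : ZMod L) = q'.1 + (Fdist M q' : ZMod L))
    (hsnd : q.2 = q'.2) : q = q' := by
  rcases Nat.eq_or_lt_of_le hle with heq | hlt
  · rw [← heq] at hfst
    have h1 : q.1 = q'.1 := by
      have := add_right_cancel hfst; exact this
    exact Prod.ext h1 hsnd
  · exfalso
    have h1 : q.1 = q'.1 + ((Fdist M q' - Fdist M q : ℕ) : ZMod L) := by
      rw [Nat.cast_sub hle]
      linear_combination hfst
    have hj := run hM hq' (Fdist M q' - Fdist M q) (by omega) (by omega)
    have hq1 : q = (q'.1 + ((Fdist M q' - Fdist M q : ℕ) : ZMod L), q'.2) :=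
      Prod.ext h1 hsnd
    rw [hq1, hj] at hq
    exact absurd hq (by decide)

lemma step_inj (hM : IsCovering M) {q q' : Idx L N} (hq : M q = 0) (hq' : M q' = 0)
    (h : stepUR M q = stepUR M q') : q = q' := by
  have hfst : q.1 + (Fdist M q : ZMod L) = q'.1 + (Fdist M q' : ZMod L) :=
    congrArg Prod.fst h
  have hsnd : q.2 = q'.2 := add_right_cancel (congrArg Prod.snd h)
  rcases le_total (Fdist M q) (Fdist M q') with hle | hle
  · exact step_inj_aux hM hq hq' hle hfst hsnd
  · exact (step_inj_aux hM hq' hq hle hfst.symm hsnd.symm).symm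

/-- Rigidity: the horizontal displacements along the loops of two particles started in the
same row stay within `L` of each other forever. -/
lemma core (hex : RowEx M) (q q' : Idx L N) (h2 : q.2 = q'.2) (n : ℕ) :
    Dsum M n q ≤ (q'.1 - q.1).val + Dsum M n q' ∧
      (q'.1 - q.1).val + Dsum M n q' ≤ L + Dsum M n q := by
  induction n with
  | zero =>
    simp only [Dsum, Finset.range_zero, Finset.sum_empty, add_zero]
    exact ⟨Nat.zero_le _, (ZMod.val_lt _).le⟩
  | succ n ih =>
    obtain ⟨ih1, ih2⟩ := ih
    set d := (q'.1 - q.1).val with hd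
    set u := (stepUR M)^[n] q with hu
    set u' := (stepUR M)^[n] q' with hu'
    have hrow : u.2 = u'.2 := by rw [hu, hu', iter_snd, iter_snd, h2]
    set e := d + Dsum M n q' - Dsum M n q with hedef
    have heD : e + Dsum M n q = d + Dsum M n q' := Nat.sub_add_cancel ih1
    have heL : e ≤ L := by omega
    have he : u'.1 - u.1 = ((e : ℕ) : ZMod L) := by
      have hcast : ((e : ℕ) : ZMod L) + (Dsum M n q : ZMod L)
          = (q'.1 - q.1) + (Dsum M n q' : ZMod L) := by
        have h3 : ((e + Dsum M n q : ℕ) : ZMod L) = ((d + Dsum M n q' : ℕ) : ZMod L) := by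
          rw [heD]
        push_cast at h3
        rwa [hd, ZMod.natCast_zmod_val] at h3
      rw [hu, hu', iter_fst, iter_fst]
      linear_combination -hcast
    rw [Dsum_succ, Dsum_succ]
    by_cases huu : u = u'
    · have hF : Fdist M ((stepUR M)^[n] q) = Fdist M ((stepUR M)^[n] q') := by
        rw [← hu, ← hu', huu]
      constructor <;> omega
    · have hene : u'.1 - u.1 ≠ 0 := by
        intro h0
        apply huu
        have h1 : u'.1 = u.1 := by rwa [sub_eq_zero] at h0
        exact Prod.ext h1.symm hrow
      have heL' : e < L := by
        rcases Nat.lt_or_ge e L with h | h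
        · exact h
        · exfalso
          apply hene
          rw [he]
          have hEL : e = L := by omega
          rw [hEL]
          exact ZMod.natCast_self L
      have hδe : (u'.1 - u.1).val = e := by
        rw [he, ZMod.val_natCast, Nat.mod_eq_of_lt heL']
      have h1 : Fdist M u ≤ e + Fdist M u' := by
        have := F_le_F hex u u' hrow
        rwa [hδe] at this
      have hneg : (u.1 - u'.1).val = L - e := by
        have hnn : u.1 - u'.1 = -(u'.1 - u.1) := by ring
        rw [hnn, ZMod.neg_val, if_neg hene, hδe]
      have h2' : Fdist M u' ≤ (L - e) + Fdist M u := by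
        have := F_le_F hex u' u hrow.symm
        rwa [hneg] at this
      rw [hu, hu'] at h1 h2'
      constructor <;> omega

lemma sigma_inj_aux (hM : IsCovering M) {q q' : Idx L N} (hq : M q = 0) (hq' : M q' = 0)
    (hsnd : q.2 = q'.2) {j j' : ℕ} (hj : j < Fdist M q) (_hj' : j' < Fdist M q')
    (hle : j' ≤ j)
    (hfst : q.1 + ((j + 1 : ℕ) : ZMod L) = q'.1 + ((j' + 1 : ℕ) : ZMod L)) :
    q = q' ∧ j = j' := by
  rcases Nat.eq_or_lt_of_le hle with heq | hlt
  · subst heq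
    have h1 : q.1 = q'.1 := add_right_cancel hfst
    exact ⟨Prod.ext h1 hsnd, rfl⟩
  · exfalso
    have h1 : q'.1 = q.1 + ((j - j' : ℕ) : ZMod L) := by
      rw [Nat.cast_sub hle]
      push_cast at hfst ⊢
      linear_combination -hfst
    have hrun := run hM hq (j - j') (by omega) (by omega)
    have hq'eq : q' = (q.1 + ((j - j' : ℕ) : ZMod L), q.2) := Prod.ext h1 hsnd.symm
    rw [hq'eq, hrun] at hq'
    exact absurd hq' (by decide)

/-- Every north-west dimer lies on the run of a (unique) particle. -/
lemma anchor_exists (hM : IsCovering M) (hex : RowEx M) {d : Idx L N} (hd : M d = 1) :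
    ∃ (q : Idx L N) (j : ℕ), M q = 0 ∧ j < Fdist M q ∧
      ((q.1 + ((j + 1 : ℕ) : ZMod L), q.2) : Idx L N) = d := by
  set A := {k : ℕ | M (d.1 - ((k + 1 : ℕ) : ZMod L), d.2) ≠ 1} with hA
  have hAne : A.Nonempty := by
    obtain ⟨s, hs⟩ := hex d.2
    have hk0 : (d.1 - s).val ≠ 0 := by
      intro h0
      have h1 : d.1 - s = 0 := by rwa [← ZMod.val_eq_zero]
      have hsd : d.1 = s := by rwa [sub_eq_zero] at h1
      rw [← hsd] at hs
      rw [Prod.mk.eta] at hs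
      rw [hs] at hd
      exact absurd hd (by decide)
    refine ⟨(d.1 - s).val - 1, ?_⟩
    show M (d.1 - (((d.1 - s).val - 1 + 1 : ℕ) : ZMod L), d.2) ≠ 1
    rw [Nat.sub_add_cancel (by omega), ZMod.natCast_zmod_val]
    have h2 : d.1 - (d.1 - s) = s := by ring
    rw [h2, hs]
    decide
  set a := sInf A with ha
  have haMem : M (d.1 - ((a + 1 : ℕ) : ZMod L), d.2) ≠ 1 := Nat.sInf_mem hAne
  have haNot : ∀ k, k < a → M (d.1 - ((k + 1 : ℕ) : ZMod L), d.2) = 1 := by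
    intro k hk
    by_contra hne
    have hle2 : a ≤ k := by rw [ha]; exact Nat.sInf_le hne
    omega
  set y : ZMod L := d.1 - ((a + 1 : ℕ) : ZMod L) with hy
  have hall : ∀ i : ℕ, 1 ≤ i → i ≤ a + 1 → M (y + (i : ZMod L), d.2) = 1 := by
    intro i h1 h2
    have hpos : y + (i : ZMod L) = d.1 - ((a + 1 - i : ℕ) : ZMod L) := by
      rw [hy, Nat.cast_sub h2]
      ring
    rw [hpos]
    rcases Nat.eq_or_lt_of_le h2 with he | hlt
    · rw [he]
      simp only [Nat.sub_self, Nat.cast_zero, sub_zero]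
      rw [Prod.mk.eta]
      exact hd
    · have hk : a + 1 - i = (a - i) + 1 := by omega
      rw [hk]
      exact haNot (a - i) (by omega)
  have hy1 : M (y + (1 : ZMod L), d.2) = 1 := by
    have := hall 1 le_rfl (by omega)
    simpa using this
  have hyne2 : M (y, d.2) ≠ 2 := fun h2 => not_12 hM y d.2 ⟨hy1, h2⟩
  have hy0 : M (y, d.2) = 0 := by
    have h3 : ∀ x : Fin 3, x ≠ 1 → x ≠ 2 → x = 0 := by decide
    exact h3 _ haMem hyne2
  set q : Idx L N := (y, d.2) with hqdef
  have hq0 : M q = 0 := hy0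
  have haF : a < Fdist M q := by
    by_contra hge
    push_neg at hge
    have hend := endrun hM hex q
    have hstep : q.1 + (Fdist M q : ZMod L) + 1 = y + ((Fdist M q + 1 : ℕ) : ZMod L) := by
      push_cast
      ring
    rw [hstep] at hend
    exact hend (hall (Fdist M q + 1) (by omega) (by omega))
  refine ⟨q, a, hq0, haF, ?_⟩
  have hfst : q.1 + ((a + 1 : ℕ) : ZMod L) = d.1 := by
    show y + ((a + 1 : ℕ) : ZMod L) = d.1
    rw [hy]
    ring
  calc ((q.1 + ((a + 1 : ℕ) : ZMod L), q.2) : Idx L N) = (d.1, d.2) := by rw [hfst]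
    _ = d := Prod.mk.eta

/-- The key counting identity: `(N k₁) S = (L k₂) T` for the loop of any particle,
together with the divisibility facts needed to convert it into winding numbers. -/
theorem key_counting {k1 k2 : ℕ} (hk1 : 0 < k1)
    (hM : IsCovering M)
    (hrow : ∀ t : ZMod N, (Finset.univ.filter fun s : ZMod L => M (s, t) = 0).card = k1)
    (hcol : ∀ s : ZMod L, (Finset.univ.filter fun t : ZMod N => M (s, t) = 1).card = k2)
    (p : Idx L N) (hp : M p = 0) :
    (N * k1) * Dsum M (retTime M p) p = (L * k2) * retTime M p ∧
      N ∣ retTime M p ∧ L ∣ Dsum M (retTime M p) p ∧ 0 < retTime M p := by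
  classical
  have hex : RowEx M := by
    intro v
    have hpos : 0 < (Finset.univ.filter fun s : ZMod L => M (s, v) = 0).card := by
      rw [hrow v]; exact hk1
    obtain ⟨s, hs⟩ := Finset.card_pos.mp hpos
    exact ⟨s, (Finset.mem_filter.mp hs).2⟩
  -- the permutation of particles
  let PT := {b : Idx L N // M b = 0}
  let gfun : PT → PT := fun x => ⟨stepUR M x.1, step_particle hex x.1⟩
  have ginj : Function.Injective gfun := by
    intro a b hab
    exact Subtype.ext (step_inj hM a.2 b.2 (congrArg Subtype.val hab))
  let eqv : Equiv.Perm PT := Equiv.ofBijective gfun (Finite.injective_iff_bijective.mp ginj)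
  have hiter : ∀ (n : ℕ) (x : PT), (stepUR M)^[n] x.1 = ((eqv ^ n) x).1 := by
    intro n
    induction n with
    | zero => intro x; simp
    | succ n ih =>
      intro x
      rw [Function.iterate_succ_apply]
      have h1 : stepUR M x.1 = (eqv x).1 := rfl
      rw [h1, ih (eqv x), pow_succ, Equiv.Perm.mul_apply]
  set R := orderOf eqv with hRdef
  have hR0 : 0 < R := orderOf_pos eqv
  have hRfix : ∀ q : Idx L N, M q = 0 → (stepUR M)^[R] q = q := by
    intro q hq
    have h1 := hiter R ⟨q, hq⟩
    rw [pow_orderOf_eq_one] at h1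
    simpa using h1
  -- return time of p
  have hTmem : 0 < retTime M p ∧ (stepUR M)^[retTime M p] p = p :=
    Nat.sInf_mem (⟨R, hR0, hRfix p hp⟩ : {t : ℕ | 0 < t ∧ (stepUR M)^[t] p = p}.Nonempty)
  obtain ⟨hT0, hTfix⟩ := hTmem
  set T := retTime M p with hTdef
  have hTdvdR : T ∣ R := by
    have h1 : (stepUR M)^[T * (R / T)] p = p := by
      rw [Function.iterate_mul]; exact Function.iterate_fixed hTfix _
    have h2 : (stepUR M)^[R % T] p = p := by
      have h3 : (stepUR M)^[T * (R / T) + R % T] p = p := by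
        rw [Nat.div_add_mod]; exact hRfix p hp
      rwa [add_comm, Function.iterate_add_apply, h1] at h3
    rcases Nat.eq_zero_or_pos (R % T) with h0 | h0
    · exact Nat.dvd_of_mod_eq_zero h0
    · exfalso
      have hle : T ≤ R % T := by
        rw [hTdef]
        exact Nat.sInf_le ⟨h0, h2⟩
      have hlt : R % T < T := Nat.mod_lt _ hT0
      omega
  have hNdvdT : N ∣ T := by
    have h1 := iter_snd (M := M) p T
    rw [hTfix] at h1
    have hz : ((T : ℕ) : ZMod N) = 0 := left_eq_add.mp h1
    exact (ZMod.natCast_eq_zero_iff T N).mp hz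
  set S := Dsum M T p with hSdef
  have hLdvdS : L ∣ S := by
    have h1 := iter_fst (M := M) p T
    rw [hTfix] at h1
    have hz : ((S : ℕ) : ZMod L) = 0 := left_eq_add.mp h1
    exact (ZMod.natCast_eq_zero_iff S L).mp hz
  -- particles stay particles along the loop
  have hiterpart : ∀ (q : Idx L N), M q = 0 → ∀ i, M ((stepUR M)^[i] q) = 0 := by
    intro q hq i
    cases i with
    | zero => simpa using hq
    | succ i => rw [Function.iterate_succ_apply']; exact step_particle hex _
  -- the displacement over R steps is constant among particles
  have hDRshift : ∀ q : Idx L N, M q = 0 → Dsum M R (stepUR M q) = Dsum M R q := by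
    intro q hq
    have h1 : Dsum M (R + 1) q = Dsum M R q + Fdist M q := by
      rw [Dsum_succ, hRfix q hq]
    have h2 : Dsum M (R + 1) q = Fdist M q + Dsum M R (stepUR M q) := by
      have h3 : R + 1 = 1 + R := by ring
      rw [h3, Dsum_add, Dsum_one]
      simp
    omega
  have hDRiter : ∀ (q : Idx L N), M q = 0 → ∀ i,
      Dsum M R ((stepUR M)^[i] q) = Dsum M R q := by
    intro q hq i
    induction i with
    | zero => rfl
    | succ i ih =>
      rw [Function.iterate_succ_apply', hDRshift _ (hiterpart q hq i), ih]
  have habs : ∀ a b dd : ℕ, (∀ m : ℕ, m * a ≤ dd + m * b ∧ dd + m * b ≤ L + m * a) →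
      a = b := by
    intro a b dd h
    rcases Nat.lt_trichotomy a b with hlt | heq | hlt
    · exfalso
      obtain ⟨_, h2⟩ := h (dd + L + 1)
      have hm : (dd + L + 1) * a + (dd + L + 1) ≤ (dd + L + 1) * b := by
        calc (dd + L + 1) * a + (dd + L + 1) = (dd + L + 1) * (a + 1) := by ring
          _ ≤ (dd + L + 1) * b := Nat.mul_le_mul_left _ hlt
      generalize (dd + L + 1) * a = A at hm h2
      generalize (dd + L + 1) * b = B at hm h2
      omega
    · exact heq
    · exfalso
      obtain ⟨h1, _⟩ := h (dd + L + 1)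
      have hm : (dd + L + 1) * b + (dd + L + 1) ≤ (dd + L + 1) * a := by
        calc (dd + L + 1) * b + (dd + L + 1) = (dd + L + 1) * (b + 1) := by ring
          _ ≤ (dd + L + 1) * a := Nat.mul_le_mul_left _ hlt
      generalize (dd + L + 1) * a = A at hm h1
      generalize (dd + L + 1) * b = B at hm h1
      omega
  have hDRrow : ∀ q q' : Idx L N, M q = 0 → M q' = 0 → q.2 = q'.2 →
      Dsum M R q = Dsum M R q' := by
    intro q q' hq hq' hrow2
    apply habs _ _ ((q'.1 - q.1).val)
    intro m
    have hc := core hex q q' hrow2 (R * m)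
    rwa [Dsum_period_mul (hRfix q hq) m, Dsum_period_mul (hRfix q' hq') m] at hc
  have hDRconst : ∀ q : Idx L N, M q = 0 → Dsum M R q = Dsum M R p := by
    intro q hq
    have hi := iter_snd (M := M) q ((p.2 - q.2).val)
    rw [ZMod.natCast_zmod_val, add_comm, sub_add_cancel] at hi
    have h1 := hDRrow ((stepUR M)^[(p.2 - q.2).val] q) p
      (hiterpart q hq _) hp hi
    rwa [hDRiter q hq] at h1
  -- summing the displacement over all particles, two ways
  set P := Finset.univ.filter fun b : Idx L N => M b = 0 with hPdef
  have hPmem : ∀ b : Idx L N, b ∈ P ↔ M b = 0 := by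
    intro b; simp [hPdef]
  have hsum_sub : ∀ f : Idx L N → ℕ, ∑ q ∈ P, f q = ∑ x : PT, f x.1 := by
    intro f
    exact Finset.sum_subtype P hPmem f
  have hshift : ∀ i : ℕ, ∑ q ∈ P, Fdist M ((stepUR M)^[i] q) = ∑ q ∈ P, Fdist M q := by
    intro i
    rw [hsum_sub, hsum_sub]
    calc ∑ x : PT, Fdist M ((stepUR M)^[i] x.1)
        = ∑ x : PT, Fdist M (((eqv ^ i) x).1) :=
          Finset.sum_congr rfl (fun x _ => by rw [hiter])
      _ = ∑ x : PT, Fdist M x.1 := Equiv.sum_comp (eqv ^ i) (fun x => Fdist M x.1)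
  have hcard : P.card = N * k1 := by
    rw [hPdef, Finset.card_filter, ← Finset.univ_product_univ, Finset.sum_product,
      Finset.sum_comm]
    calc ∑ t : ZMod N, ∑ s : ZMod L, (if M (s, t) = 0 then 1 else 0)
        = ∑ _t : ZMod N, k1 :=
          Finset.sum_congr rfl (fun t _ => by rw [← Finset.card_filter]; exact hrow t)
      _ = N * k1 := by
          simp [Finset.sum_const, Finset.card_univ, ZMod.card]
  have hNW : (Finset.univ.filter fun b : Idx L N => M b = 1).card = L * k2 := by
    rw [Finset.card_filter, ← Finset.univ_product_univ, Finset.sum_product]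
    calc ∑ s : ZMod L, ∑ t : ZMod N, (if M (s, t) = 1 then 1 else 0)
        = ∑ _s : ZMod L, k2 :=
          Finset.sum_congr rfl (fun s _ => by rw [← Finset.card_filter]; exact hcol s)
      _ = L * k2 := by
          simp [Finset.sum_const, Finset.card_univ, ZMod.card]
  -- total NW dimers = sum of Fdist over all particles
  have hG1 : ∑ q ∈ P, Fdist M q = L * k2 := by
    rw [← hNW]
    have h0 : ∑ q ∈ P, Fdist M q = (P.sigma fun q => Finset.range (Fdist M q)).card := by
      rw [Finset.card_sigma]
      exact Finset.sum_congr rfl (fun q _ => (Finset.card_range _).symm)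
    rw [h0]
    apply Finset.card_bij
      (fun (x : Σ _ : Idx L N, ℕ) _ => ((x.1.1 + ((x.2 + 1 : ℕ) : ZMod L), x.1.2) : Idx L N))
    · rintro ⟨q, j⟩ hx
      simp only [Finset.mem_sigma, Finset.mem_range] at hx
      obtain ⟨hqP, hj⟩ := hx
      dsimp only
      rw [Finset.mem_filter]
      refine ⟨Finset.mem_univ _, ?_⟩
      exact run hM ((hPmem q).mp hqP) (j + 1) (by omega) (by omega)
    · rintro ⟨q, j⟩ hx ⟨q', j'⟩ hx' heq
      simp only [Finset.mem_sigma, Finset.mem_range] at hx hx'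
      obtain ⟨hqP, hj⟩ := hx
      obtain ⟨hq'P, hj'⟩ := hx'
      have hq0 : M q = 0 := (hPmem q).mp hqP
      have hq'0 : M q' = 0 := (hPmem q').mp hq'P
      dsimp only at heq
      have hfst : q.1 + ((j + 1 : ℕ) : ZMod L) = q'.1 + ((j' + 1 : ℕ) : ZMod L) :=
        (Prod.ext_iff.mp heq).1
      have hsnd : q.2 = q'.2 := (Prod.ext_iff.mp heq).2
      rcases le_total j' j with hle | hle
      · obtain ⟨hqq, hjj⟩ := sigma_inj_aux hM hq0 hq'0 hsnd hj hj' hle hfst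
        subst hqq; subst hjj; rfl
      · obtain ⟨hqq, hjj⟩ := sigma_inj_aux hM hq'0 hq0 hsnd.symm hj' hj hle hfst.symm
        subst hqq; subst hjj; rfl
    · intro d hd
      rw [Finset.mem_filter] at hd
      obtain ⟨q, j, hq0, hjF, heq⟩ := anchor_exists hM hex hd.2
      refine ⟨⟨q, j⟩, ?_, heq⟩
      simp only [Finset.mem_sigma, Finset.mem_range]
      exact ⟨(hPmem q).mpr hq0, hjF⟩
  -- put everything together
  set W := Dsum M R p with hWdef
  have hsum1 : ∑ q ∈ P, Dsum M R q = (N * k1) * W := by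
    calc ∑ q ∈ P, Dsum M R q = ∑ _q ∈ P, W :=
          Finset.sum_congr rfl (fun q hq => hDRconst q ((hPmem q).mp hq))
      _ = P.card * W := by rw [Finset.sum_const, smul_eq_mul]
      _ = (N * k1) * W := by rw [hcard]
  have hsum2 : ∑ q ∈ P, Dsum M R q = R * (L * k2) := by
    calc ∑ q ∈ P, Dsum M R q
        = ∑ q ∈ P, ∑ i ∈ Finset.range R, Fdist M ((stepUR M)^[i] q) := rfl
      _ = ∑ i ∈ Finset.range R, ∑ q ∈ P, Fdist M ((stepUR M)^[i] q) := Finset.sum_comm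
      _ = ∑ _i ∈ Finset.range R, ∑ q ∈ P, Fdist M q :=
          Finset.sum_congr rfl (fun i _ => hshift i)
      _ = R * (L * k2) := by rw [Finset.sum_const, smul_eq_mul, Finset.card_range, hG1]
  have hKW : (N * k1) * W = R * (L * k2) := by rw [← hsum1, hsum2]
  obtain ⟨c, hc⟩ := hTdvdR
  have hcpos : 0 < c := by
    rcases Nat.eq_zero_or_pos c with h0 | h0
    · rw [h0, mul_zero] at hc; omega
    · exact h0
  have hWc : W = c * S := by
    rw [hWdef, hc, Dsum_period_mul hTfix c, hSdef]
  have h5 : c * ((N * k1) * S) = c * ((L * k2) * T) := by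
    have e1 : c * ((N * k1) * S) = (N * k1) * W := by rw [hWc]; ring
    have e2 : c * ((L * k2) * T) = R * (L * k2) := by rw [hc]; ring
    rw [e1, e2, hKW]
  exact ⟨Nat.eq_of_mul_eq_mul_left hcpos h5, hNdvdT, hLdvdS, hT0⟩

end Aux

/-- For a covering with `k₁ > 0` vertical dimers per row and `k₂ > 0`
north-west dimers per column, the winding numbers of the loop `Γ` of up-right neighbours
satisfy `N_h k₁ = N_v k₂`; in particular, with `m₁ = k₁`, the number
`m₂ := m₁ N_h / N_v` is an integer equal to `k₂`, and `m₁/L + m₂/N < 1` whenever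
`n₁ + n₂ < NL` (with `n₁ = N k₁`, `n₂ = L k₂`). -/
theorem winding_ratio_eq_k2
    {L N : ℕ} [NeZero L] [NeZero N]
    (k1 k2 : ℕ) (hk1 : 0 < k1) (hk2 : 0 < k2)
    (M : Covering L N) (hM : IsCovering M)
    (hrow : ∀ t : ZMod N, (Finset.univ.filter fun s : ZMod L => M (s, t) = 0).card = k1)
    (hcol : ∀ s : ZMod L, (Finset.univ.filter fun t : ZMod N => M (s, t) = 1).card = k2)
    (p : Idx L N) (hp : M p = 0) :
    windH M p * k1 = windV M p * k2 ∧
    windV M p ∣ k1 * windH M p ∧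
    k1 * windH M p / windV M p = k2 ∧
    (N * k1 + L * k2 < N * L →
      k1 * N + (k1 * windH M p / windV M p) * L < L * N) := by
  obtain ⟨hmain, hNdvdT, hLdvdS, hT0⟩ := key_counting hk1 hM hrow hcol p hp
  have hN0 : 0 < N := Nat.pos_of_ne_zero (NeZero.ne N)
  have hL0 : 0 < L := Nat.pos_of_ne_zero (NeZero.ne L)
  have hwH : windH M p = Dsum M (retTime M p) p / L := rfl
  have hwV : windV M p = retTime M p / N := rfl
  have hS : Dsum M (retTime M p) p = L * windH M p := by
    rw [hwH]; exact (Nat.mul_div_cancel' hLdvdS).symm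
  have hT : retTime M p = N * windV M p := by
    rw [hwV]; exact (Nat.mul_div_cancel' hNdvdT).symm
  rw [hS, hT] at hmain
  have hNL : (N * L) * (k1 * windH M p) = (N * L) * (windV M p * k2) := by
    calc (N * L) * (k1 * windH M p) = (N * k1) * (L * windH M p) := by ring
      _ = (L * k2) * (N * windV M p) := hmain
      _ = (N * L) * (windV M p * k2) := by ring
  have hmul : k1 * windH M p = windV M p * k2 :=
    Nat.eq_of_mul_eq_mul_left (Nat.mul_pos hN0 hL0) hNL
  have hwVpos : 0 < windV M p := by
    rw [hwV]; exact Nat.div_pos (Nat.le_of_dvd hT0 hNdvdT) hN0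
  have hdiv : k1 * windH M p / windV M p = k2 := by
    rw [hmul]; exact Nat.mul_div_cancel_left k2 hwVpos
  refine ⟨by rw [mul_comm]; exact hmul, ⟨k2, hmul⟩, hdiv, ?_⟩
  intro h
  rw [hdiv]
  calc k1 * N + k2 * L = N * k1 + L * k2 := by ring
    _ < N * L := h
    _ = L * N := by ring

end HexDimers
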